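/- Let W^{op}(τ) be a differentiable family of d×q complex matrices satisfying Ẇ^{op} = (1/2)L W^{op} at τ=0 for a Hermitian matrix L, and let V(τ) be a differentiable family of q×q unitary matrices. Then for W(τ) = W^{op}(τ)V(τ), at τ=0 one has tr(Ẇ Ẇ†) = tr(Ẇ^{op}(Ẇ^{op})†) + tr(W^{op} V̇ V̇† (W^{op})†) ≥ tr(Ẇ^{op}(Ẇ^{op})†). -/

import Mathlib

open Matrix ComplexOrder

attribute [local instance] Matrix.normedAddCommGroup Matrix.normedSpace

section aux

variable {m n p : Type*} [Fintype m] [Fintype n] [Fintype p]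
  [DecidableEq m] [DecidableEq n] [DecidableEq p]

/-- Matrix multiplication as an `ℝ`-bilinear map. -/
noncomputable def mulBil :
    Matrix m n ℂ →ₗ[ℝ] Matrix n p ℂ →ₗ[ℝ] Matrix m p ℂ :=
  LinearMap.mk₂ ℝ (fun A B => A * B)
    (fun A A' B => Matrix.add_mul A A' B)
    (fun r A B => Matrix.smul_mul r A B)
    (fun A B B' => Matrix.mul_add A B B')
    (fun r A B => Matrix.mul_smul A r B)

/-- Matrix multiplication as a continuous bilinear map (finite dimensions). -/
noncomputable def mulCLM :
    Matrix m n ℂ →L[ℝ] Matrix n p ℂ →L[ℝ] Matrix m p ℂ :=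
  LinearMap.toContinuousLinearMap
    { toFun := fun A => LinearMap.toContinuousLinearMap (mulBil (m := m) (p := p) A)
      map_add' := by
        intro A A'
        ext B
        simp [mulBil]
      map_smul' := by
        intro r A
        ext B
        simp [mulBil] }

@[simp] lemma mulCLM_apply (A : Matrix m n ℂ) (B : Matrix n p ℂ) :
    mulCLM A B = A * B := by
  simp [mulCLM, mulBil]

lemma HasDerivAt.matrix_mul {f : ℝ → Matrix m n ℂ} {g : ℝ → Matrix n p ℂ}
    {f' : Matrix m n ℂ} {g' : Matrix n p ℂ} {x : ℝ}
    (hf : HasDerivAt f f' x) (hg : HasDerivAt g g' x) :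
    HasDerivAt (fun τ => f τ * g τ) (f' * g x + f x * g') x := by
  have hfe : ∀ i j, HasDerivAt (fun τ => f τ i j) (f' i j) x := fun i j =>
    hasDerivAt_pi.1 ((hasDerivAt_pi (φ := fun τ => (f τ : m → n → ℂ))).1 (by exact hf) i) j
  have hge : ∀ i j, HasDerivAt (fun τ => g τ i j) (g' i j) x := fun i j =>
    hasDerivAt_pi.1 ((hasDerivAt_pi (φ := fun τ => (g τ : n → p → ℂ))).1 (by exact hg) i) j
  have key : HasDerivAt (fun τ => ((f τ * g τ : Matrix m p ℂ) : m → p → ℂ))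
      ((f' * g x + f x * g' : Matrix m p ℂ) : m → p → ℂ) x := by
    refine hasDerivAt_pi.2 fun i => hasDerivAt_pi.2 fun k => ?_
    have hs := HasDerivAt.fun_sum (u := Finset.univ)
      (fun j _ => (hfe i j).fun_mul (hge j k))
    simpa [Matrix.mul_apply, Finset.sum_add_distrib] using hs
  exact key

/-- Conjugate transpose as a continuous `ℝ`-linear map. -/
noncomputable def ctCLM : Matrix m n ℂ →L[ℝ] Matrix n m ℂ :=
  LinearMap.toContinuousLinearMap
    { toFun := fun A => Aᴴ
      map_add' := fun A B => conjTranspose_add A B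
      map_smul' := by
        intro r A
        ext i j
        simp [conjTranspose_apply] }

@[simp] lemma ctCLM_apply (A : Matrix m n ℂ) : ctCLM A = Aᴴ := rfl

lemma HasDerivAt.matrix_conjTranspose {f : ℝ → Matrix m n ℂ}
    {f' : Matrix m n ℂ} {x : ℝ} (hf : HasDerivAt f f' x) :
    HasDerivAt (fun τ => (f τ)ᴴ) f'ᴴ x := by
  exact ((ctCLM (m := m) (n := n)).hasFDerivAt.comp_hasDerivAt x (by exact hf))

lemma trace_mul_conjTranspose_self_nonneg (B : Matrix m n ℂ) :
    0 ≤ (B * Bᴴ).trace := by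
  rw [Matrix.trace]
  refine Finset.sum_nonneg fun i _ => ?_
  rw [Matrix.diag_apply, Matrix.mul_apply]
  refine Finset.sum_nonneg fun j _ => ?_
  simpa [conjTranspose_apply] using mul_star_self_nonneg (B i j)

end aux

/-- If `Ẇop(0) = (1/2) L Wop(0)` with `L` Hermitian and `V` is a differentiable family of
unitaries, then for `W = Wop * V`, at `τ = 0`,
`tr(Ẇ Ẇᴴ) = tr(Ẇop Ẇopᴴ) + tr(Wop V̇ V̇ᴴ Wopᴴ) ≥ tr(Ẇop Ẇopᴴ)`. -/
theorem stmt3 {d q : ℕ} (Wop : ℝ → Matrix (Fin d) (Fin q) ℂ)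
    (V : ℝ → Matrix (Fin q) (Fin q) ℂ)
    (Wopdot : Matrix (Fin d) (Fin q) ℂ) (Vdot : Matrix (Fin q) (Fin q) ℂ)
    (L : Matrix (Fin d) (Fin d) ℂ) (hL : L.IsHermitian)
    (hV : ∀ τ, V τ ∈ Matrix.unitaryGroup (Fin q) ℂ)
    (hWop : HasDerivAt Wop Wopdot 0)
    (hVd : HasDerivAt V Vdot 0)
    (hEq : Wopdot = (1 / 2 : ℂ) • (L * Wop 0)) :
    ∀ Wdot : Matrix (Fin d) (Fin q) ℂ,
      HasDerivAt (fun τ => Wop τ * V τ) Wdot 0 →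
        (Wdot * Wdotᴴ).trace =
            (Wopdot * Wopdotᴴ).trace + (Wop 0 * Vdot * Vdotᴴ * (Wop 0)ᴴ).trace ∧
          (Wopdot * Wopdotᴴ).trace ≤ (Wdot * Wdotᴴ).trace := by
  intro Wdot hW
  -- identify Wdot
  have hW' : HasDerivAt (fun τ => Wop τ * V τ) (Wopdot * V 0 + Wop 0 * Vdot) 0 :=
    hWop.matrix_mul hVd
  have hWdot : Wdot = Wopdot * V 0 + Wop 0 * Vdot := hW.unique hW'
  set W0 := Wop 0
  set V0 := V 0
  -- unitarity at 0
  have hVV : V0 * V0ᴴ = 1 := by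
    simpa [star_eq_conjTranspose] using (Matrix.mem_unitaryGroup_iff.mp (hV 0))
  -- derivative of V * Vᴴ is zero since it is constantly 1
  have hconst : HasDerivAt (fun τ => V τ * (V τ)ᴴ)
      (Vdot * V0ᴴ + V0 * Vdotᴴ) 0 := hVd.matrix_mul hVd.matrix_conjTranspose
  have hone : (fun τ => V τ * (V τ)ᴴ) = fun _ => (1 : Matrix (Fin q) (Fin q) ℂ) := by
    funext τ
    simpa [star_eq_conjTranspose] using (Matrix.mem_unitaryGroup_iff.mp (hV τ))
  have hzero : HasDerivAt (fun τ => V τ * (V τ)ᴴ)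
      (0 : Matrix (Fin q) (Fin q) ℂ) 0 := by
    rw [hone]; exact hasDerivAt_const _ _
  have hanti : Vdot * V0ᴴ = -(V0 * Vdotᴴ) :=
    eq_neg_of_add_eq_zero_left (hconst.unique hzero)
  -- cross terms cancel
  have hcross : (Wopdot * V0 * (Vdotᴴ * W0ᴴ)).trace
      + (W0 * Vdot * (V0ᴴ * Wopdotᴴ)).trace = 0 := by
    have hLH : Lᴴ = L := hL
    have h1 : (Wopdot * V0 * (Vdotᴴ * W0ᴴ)).trace
        = (1 / 2 : ℂ) * (L * (W0 * (V0 * Vdotᴴ) * W0ᴴ)).trace := by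
      rw [hEq]
      simp only [Matrix.smul_mul, Matrix.trace_smul, smul_eq_mul]
      congr 2
      simp only [Matrix.mul_assoc]
    have h2 : (W0 * Vdot * (V0ᴴ * Wopdotᴴ)).trace
        = -((1 / 2 : ℂ) * (L * (W0 * (V0 * Vdotᴴ) * W0ᴴ)).trace) := by
      rw [hEq, Matrix.conjTranspose_smul, Matrix.conjTranspose_mul, hLH]
      have hs : star ((1 : ℂ) / 2) = (1 : ℂ) / 2 := by norm_num
      rw [hs]
      simp only [Matrix.mul_smul, Matrix.trace_smul, smul_eq_mul]
      have e : W0 * Vdot * (V0ᴴ * (W0ᴴ * L)) = W0 * (Vdot * V0ᴴ) * (W0ᴴ * L) := by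
        simp only [Matrix.mul_assoc]
      rw [e, hanti]
      have e2 : W0 * -(V0 * Vdotᴴ) * (W0ᴴ * L)
          = -((W0 * (V0 * Vdotᴴ) * W0ᴴ) * L) := by
        simp only [Matrix.mul_neg, Matrix.neg_mul, Matrix.mul_assoc]
      rw [e2, Matrix.trace_neg, Matrix.trace_mul_comm]
      ring
    rw [h1, h2]
    ring
  -- expand the trace
  have hexp : (Wdot * Wdotᴴ).trace
      = (Wopdot * Wopdotᴴ).trace + (W0 * Vdot * Vdotᴴ * W0ᴴ).trace := by
    rw [hWdot]
    simp only [Matrix.conjTranspose_add, Matrix.conjTranspose_mul]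
    rw [Matrix.add_mul, Matrix.mul_add, Matrix.mul_add]
    simp only [Matrix.trace_add]
    have e1 : Wopdot * V0 * (V0ᴴ * Wopdotᴴ) = Wopdot * Wopdotᴴ := by
      rw [show Wopdot * V0 * (V0ᴴ * Wopdotᴴ) = Wopdot * (V0 * V0ᴴ) * Wopdotᴴ by
        simp only [Matrix.mul_assoc], hVV, Matrix.mul_one]
    have e2 : W0 * Vdot * (Vdotᴴ * W0ᴴ) = W0 * Vdot * Vdotᴴ * W0ᴴ := by
      simp only [Matrix.mul_assoc]
    rw [e1, e2]
    linear_combination hcross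
  refine ⟨hexp, ?_⟩
  rw [hexp]
  have : 0 ≤ (W0 * Vdot * Vdotᴴ * W0ᴴ).trace := by
    have := trace_mul_conjTranspose_self_nonneg (W0 * Vdot)
    simpa [Matrix.conjTranspose_mul, Matrix.mul_assoc] using this
  exact le_add_of_nonneg_right this
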